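/- If a symmetric function U: X×X → ℝ satisfies |V^π(x) - V^π(y)| ≤ U(x,y) for all x,y, then |V^π(x) - V^π(y)| ≤ (T^π_M U)(x,y) for all x,y. That is, the set of symmetric upper bounds on value differences is invariant under the MICo operator. -/

import Mathlib

open Finset

/-- The set of symmetric upper bounds on value differences is invariant under the
MICo operator. -/
theorem mico_preserves_value_bound {X : Type*} [Fintype X]
    (γ : ℝ) (hγ0 : 0 ≤ γ) (hγ1 : γ < 1)
    (r : X → ℝ) (P : X → X → ℝ)
    (hP0 : ∀ x x', 0 ≤ P x x') (hP1 : ∀ x, ∑ x', P x x' = 1)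
    (V : X → ℝ) (hV : ∀ x, V x = r x + γ * ∑ x', P x x' * V x')
    (U : X → X → ℝ)
    (hsym : ∀ x y, U x y = U y x)
    (hbound : ∀ x y, |V x - V y| ≤ U x y) :
    ∀ x y : X, |V x - V y| ≤
      |r x - r y| + γ * ∑ x', ∑ y', P x x' * P y y' * U x' y' := by
  intro x y
  have key : V x - V y = (r x - r y) +
      γ * ∑ x', ∑ y', P x x' * P y y' * (V x' - V y') := by
    rw [hV x, hV y]
    have h1 : ∑ x', ∑ y', P x x' * P y y' * (V x' - V y')
        = ∑ x', P x x' * V x' - ∑ y', P y y' * V y' := by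
      have e1 : ∑ x', ∑ y', P x x' * P y y' * V x'
          = ∑ x', P x x' * V x' := by
        refine Finset.sum_congr rfl fun x' _ => ?_
        rw [← Finset.sum_mul]
        have : ∑ y', P x x' * P y y' = P x x' * ∑ y', P y y' := by
          rw [Finset.mul_sum]
        rw [this, hP1, mul_one]
      have e2 : ∑ x', ∑ y', P x x' * P y y' * V y'
          = ∑ y', P y y' * V y' := by
        rw [Finset.sum_comm]
        refine Finset.sum_congr rfl fun y' _ => ?_
        have : ∀ x', P x x' * P y y' * V y' = P x x' * (P y y' * V y') := by
          intro x'; ring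
        simp only [this, ← Finset.mul_sum, ← Finset.sum_mul, hP1, one_mul]
      calc ∑ x', ∑ y', P x x' * P y y' * (V x' - V y')
          = ∑ x', ∑ y', (P x x' * P y y' * V x' - P x x' * P y y' * V y') := by
            refine Finset.sum_congr rfl fun x' _ => Finset.sum_congr rfl fun y' _ => ?_; ring
        _ = (∑ x', ∑ y', P x x' * P y y' * V x') - ∑ x', ∑ y', P x x' * P y y' * V y' := by
            simp [Finset.sum_sub_distrib]
        _ = ∑ x', P x x' * V x' - ∑ y', P y y' * V y' := by rw [e1, e2]
    rw [h1]; ring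
  rw [key]
  refine (abs_add_le _ _).trans (add_le_add le_rfl ?_)
  rw [abs_mul, abs_of_nonneg hγ0]
  refine mul_le_mul_of_nonneg_left ?_ hγ0
  refine (Finset.abs_sum_le_sum_abs _ _).trans ?_
  refine Finset.sum_le_sum fun x' _ => ?_
  refine (Finset.abs_sum_le_sum_abs _ _).trans ?_
  refine Finset.sum_le_sum fun y' _ => ?_
  rw [abs_mul, abs_of_nonneg (mul_nonneg (hP0 x x') (hP0 y y'))]
  exact mul_le_mul_of_nonneg_left (hbound x' y') (mul_nonneg (hP0 x x') (hP0 y y'))
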